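/- Let ν be a finite positive Borel measure on ℝ, β = 2 − α with 0 < α ≤ 2, and suppose z = x+iy with y > 0 satisfies ν(B(z,t) ∩ ℝ) ≤ λ (t/|z|)^{2−α} for all t > 0. Then ∫_{y}^{3|z|} t^{-2} dν_z(t) ≤ (λ/|z|²)(1/3^α + (2/α)(|z|/y)^α), where ν_z(t) = ν({ξ ∈ ℝ : |ξ − z| ≤ t}). -/

import Mathlib

open MeasureTheory

open Set in
theorem stmt9 (ν : Measure ℝ) [IsFiniteMeasure ν] (α l : ℝ)
    (hα : 0 < α) (hα2 : α ≤ 2) (z : ℂ) (hy : 0 < z.im)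
    (hν : ∀ t > 0, (ν {ξ : ℝ | ‖(↑ξ - z : ℂ)‖ ≤ t}).toReal ≤
      l * (t / ‖z‖) ^ (2 - α)) :
    ∫ ξ in {ξ : ℝ | z.im ≤ ‖(↑ξ - z : ℂ)‖ ∧
        ‖(↑ξ - z : ℂ)‖ ≤ 3 * ‖z‖},
        1 / ‖(↑ξ - z : ℂ)‖ ^ 2 ∂ν ≤
      l / ‖z‖ ^ 2 *
        (1 / 3 ^ α + 2 / α * (‖z‖ / z.im) ^ α) := by
  have hz : z ≠ 0 := fun h => by simp [h] at hy
  set r := ‖z‖ with hrdef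
  set y := z.im with hydef
  have hr : 0 < r := norm_pos_iff.mpr hz
  have hyr : y ≤ r := Complex.im_le_norm z
  have hl : 0 ≤ l := by
    have h1 := hν 1 one_pos
    have h2 : (0:ℝ) < ((1:ℝ) / r) ^ (2 - α) := Real.rpow_pos_of_pos (by positivity) _
    nlinarith [ENNReal.toReal_nonneg (a := ν {ξ : ℝ | ‖(↑ξ - z : ℂ)‖ ≤ 1})]
  have hgy : ∀ ξ : ℝ, y ≤ ‖(↑ξ - z : ℂ)‖ := by
    intro ξ
    have h1 : |(↑ξ - z).im| ≤ ‖(↑ξ - z : ℂ)‖ := Complex.abs_im_le_norm _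
    have h2 : (↑ξ - z).im = -y := by simp [hydef]
    rw [h2, abs_neg, abs_of_pos hy] at h1
    exact h1
  have hgpos : ∀ ξ : ℝ, 0 < ‖(↑ξ - z : ℂ)‖ := fun ξ => lt_of_lt_of_le hy (hgy ξ)
  set S := {ξ : ℝ | y ≤ ‖(↑ξ - z : ℂ)‖ ∧ ‖(↑ξ - z : ℂ)‖ ≤ 3 * r} with hS
  set f : ℝ → ℝ := fun ξ => 1 / ‖(↑ξ - z : ℂ)‖ ^ 2 with hf
  have hfnn : ∀ ξ, 0 ≤ f ξ := fun ξ => by positivity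
  have hfb : ∀ ξ, f ξ ≤ 1 / y ^ 2 := by
    intro ξ
    apply one_div_le_one_div_of_le (by positivity)
    exact pow_le_pow_left₀ hy.le (hgy ξ) 2
  have hfcont : Continuous f := by
    apply Continuous.div continuous_const
    · exact (continuous_norm.comp (by continuity)).pow 2
    · intro ξ
      have := hgpos ξ
      positivity
  set μ := ν.restrict S with hμ
  have hfi : Integrable f μ := by
    refine Integrable.mono' (integrable_const ((1:ℝ) / y ^ 2)) hfcont.aestronglyMeasurable ?_
    filter_upwards with ξ
    rw [Real.norm_eq_abs, abs_of_nonneg (hfnn ξ)]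
    exact hfb ξ
  rw [show (∫ ξ in S, f ξ ∂ν) = ∫ ξ, f ξ ∂μ from rfl,
    hfi.integral_eq_integral_meas_lt (Filter.Eventually.of_forall hfnn)]
  set G : ℝ → ℝ := fun s => (μ {ξ : ℝ | s < f ξ}).toReal with hG
  set a := 1 / (3 * r) ^ 2 with ha
  set b := 1 / y ^ 2 with hb
  have h0a : 0 < a := by positivity
  have h0b : 0 < b := by positivity
  have hab : a ≤ b := by
    apply one_div_le_one_div_of_le (by positivity)
    nlinarith
  have hGnn : ∀ s, 0 ≤ G s := fun s => ENNReal.toReal_nonneg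
  have hGmeas : Measurable G :=
    Measurable.ennreal_toReal (Antitone.measurable
      (fun _ _ hst => measure_mono (fun _ h => lt_of_le_of_lt hst h)))
  set C₁ := l * 3 ^ (2 - α) with hC₁
  have hC₁nn : 0 ≤ C₁ := by
    have h3 : (0:ℝ) < (3:ℝ) ^ (2 - α) := Real.rpow_pos_of_pos (by norm_num) _
    positivity
  have hG1 : ∀ s, G s ≤ C₁ := by
    intro s
    have h1 : μ {ξ : ℝ | s < f ξ} ≤ ν {ξ : ℝ | ‖(↑ξ - z : ℂ)‖ ≤ 3 * r} := by
      calc μ {ξ : ℝ | s < f ξ} ≤ μ univ := measure_mono (subset_univ _)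
      _ = ν S := by rw [hμ, Measure.restrict_apply_univ]
      _ ≤ _ := measure_mono (fun ξ hξ => hξ.2)
    calc G s ≤ (ν {ξ : ℝ | ‖(↑ξ - z : ℂ)‖ ≤ 3 * r}).toReal :=
        ENNReal.toReal_mono (measure_ne_top _ _) h1
    _ ≤ l * (3 * r / r) ^ (2 - α) := hν (3 * r) (by positivity)
    _ = C₁ := by rw [hC₁, mul_div_assoc, div_self hr.ne', mul_one]
  set C₂ := l * r ^ (α - 2) with hC₂
  have hC₂nn : 0 ≤ C₂ := by
    have h3 : (0:ℝ) < r ^ (α - 2) := Real.rpow_pos_of_pos hr _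
    positivity
  set e := (α - 2) / 2 with he
  have hem : (-1:ℝ) < e := by rw [he]; linarith
  have hG2 : ∀ s, 0 < s → G s ≤ C₂ * s ^ e := by
    intro s hs
    set t := s ^ (-(1/2) : ℝ) with ht
    have htpos : 0 < t := Real.rpow_pos_of_pos hs _
    have ht2 : t ^ 2 = s⁻¹ := by
      rw [ht, ← Real.rpow_natCast (s ^ (-(1/2):ℝ)) 2, ← Real.rpow_mul hs.le]
      norm_num [Real.rpow_neg_one]
    have hsub : {ξ : ℝ | s < f ξ} ⊆ {ξ : ℝ | ‖(↑ξ - z : ℂ)‖ ≤ t} := by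
      intro ξ hξ
      simp only [Set.mem_setOf_eq, hf] at hξ ⊢
      have h2 := hgpos ξ
      have hξ' : s * ‖(↑ξ - z : ℂ)‖ ^ 2 < 1 := (lt_div_iff₀ (by positivity)).1 hξ
      have ht2s : t ^ 2 * s = 1 := by rw [ht2]; field_simp
      have h5 : ‖(↑ξ - z : ℂ)‖ ^ 2 < t ^ 2 := by nlinarith
      nlinarith
    have hTm : MeasurableSet {ξ : ℝ | s < f ξ} :=
      measurableSet_lt measurable_const hfcont.measurable
    have h1 : μ {ξ : ℝ | s < f ξ} ≤ ν {ξ : ℝ | ‖(↑ξ - z : ℂ)‖ ≤ t} := by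
      rw [hμ, Measure.restrict_apply hTm]
      exact measure_mono ((Set.inter_subset_left).trans hsub)
    calc G s ≤ (ν {ξ : ℝ | ‖(↑ξ - z : ℂ)‖ ≤ t}).toReal :=
        ENNReal.toReal_mono (measure_ne_top _ _) h1
    _ ≤ l * (t / r) ^ (2 - α) := hν t htpos
    _ = C₂ * s ^ e := by
        have hte : t ^ (2 - α) = s ^ e := by
          rw [ht, ← Real.rpow_mul hs.le, he]
          congr 1
          ring
        have hre : r ^ (α - 2) = (r ^ (2 - α))⁻¹ := by
          rw [show α - 2 = -(2 - α) by ring, Real.rpow_neg hr.le]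
        rw [hC₂, Real.div_rpow htpos.le hr.le, hte, hre]
        ring
  have hG3 : ∀ s ∈ Set.Ioi b, G s = (0:ℝ) := by
    intro s hs
    have hempty : {ξ : ℝ | s < f ξ} = (∅ : Set ℝ) := by
      ext ξ
      simp only [Set.mem_setOf_eq, Set.mem_empty_iff_false, iff_false, not_lt]
      exact (hfb ξ).trans (le_of_lt hs)
    rw [hG]
    simp [hempty]
  have hGb : IntegrableOn G (Ioc 0 b) := by
    refine Integrable.mono' ((integrableOn_const (s := Ioc 0 b) (C := C₁) measure_Ioc_lt_top.ne))
      hGmeas.aestronglyMeasurable ?_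
    filter_upwards with s
    rw [Real.norm_eq_abs, abs_of_nonneg (hGnn s)]
    exact hG1 s
  have hGint1 : IntegrableOn G (Ioc 0 a) := hGb.mono_set (Ioc_subset_Ioc_right hab)
  have hGint2 : IntegrableOn G (Ioc a b) := hGb.mono_set (Ioc_subset_Ioc_left h0a.le)
  have hGint3 : IntegrableOn G (Ioi b) :=
    (integrableOn_congr_fun hG3 measurableSet_Ioi).2 (integrableOn_zero)
  have hzero3 : (∫ s in Ioi b, G s) = 0 := by
    rw [setIntegral_congr_fun measurableSet_Ioi hG3]
    simp
  have hsplit1 : (∫ s in Ioi (0:ℝ), G s) = (∫ s in Ioc 0 b, G s) + ∫ s in Ioi b, G s := by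
    rw [← setIntegral_union (Ioc_disjoint_Ioi le_rfl) measurableSet_Ioi hGb hGint3,
      Ioc_union_Ioi_eq_Ioi h0b.le]
  have hsplit2 : (∫ s in Ioc (0:ℝ) b, G s) = (∫ s in Ioc 0 a, G s) + ∫ s in Ioc a b, G s := by
    rw [← setIntegral_union (Ioc_disjoint_Ioc_of_le le_rfl) measurableSet_Ioc hGint1 hGint2,
      Ioc_union_Ioc_eq_Ioc h0a.le hab]
  have hB1 : (∫ s in Ioc (0:ℝ) a, G s) ≤ C₁ * a := by
    calc (∫ s in Ioc (0:ℝ) a, G s) ≤ ∫ _s in Ioc (0:ℝ) a, C₁ :=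
        setIntegral_mono_on (hf := hGint1)
          (hg := integrableOn_const measure_Ioc_lt_top.ne)
          measurableSet_Ioc (fun s _ => hG1 s)
    _ = C₁ * a := by
        rw [setIntegral_const, Real.volume_real_Ioc, smul_eq_mul,
          max_eq_left (by linarith)]
        ring
  have hintC : IntegrableOn (fun s : ℝ => C₂ * s ^ e) (Ioc a b) := by
    apply (ContinuousOn.integrableOn_compact isCompact_Icc ?_).mono_set Ioc_subset_Icc_self
    refine continuousOn_const.mul (ContinuousOn.rpow_const continuousOn_id ?_)
    intro x hx
    exact Or.inl (ne_of_gt (lt_of_lt_of_le h0a hx.1))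
  have hB2 : (∫ s in Ioc a b, G s) ≤ C₂ * (2 / α) * b ^ (α / 2) := by
    have he1 : e + 1 = α / 2 := by rw [he]; ring
    have hbpow : (0:ℝ) ≤ b ^ (α / 2) := Real.rpow_nonneg h0b.le _
    have hapow : (0:ℝ) ≤ a ^ (α / 2) := Real.rpow_nonneg h0a.le _
    calc (∫ s in Ioc a b, G s) ≤ ∫ s in Ioc a b, C₂ * s ^ e :=
        setIntegral_mono_on (hf := hGint2) (hg := hintC) measurableSet_Ioc
          (fun s hs => hG2 s (lt_trans h0a hs.1))
    _ = ∫ s in a..b, C₂ * s ^ e := (intervalIntegral.integral_of_le hab).symm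
    _ = C₂ * ((b ^ (e + 1) - a ^ (e + 1)) / (e + 1)) := by
        rw [intervalIntegral.integral_const_mul, integral_rpow (Or.inl hem)]
    _ ≤ C₂ * (2 / α) * b ^ (α / 2) := by
        rw [he1]
        have hstep : (b ^ (α / 2) - a ^ (α / 2)) / (α / 2) ≤ 2 / α * b ^ (α / 2) := by
          rw [div_le_iff₀ (by positivity : (0:ℝ) < α / 2)]
          have hx : 2 / α * b ^ (α / 2) * (α / 2) = b ^ (α / 2) := by
            field_simp
          rw [hx]
          linarith
        calc C₂ * ((b ^ (α / 2) - a ^ (α / 2)) / (α / 2)) ≤ C₂ * (2 / α * b ^ (α / 2)) :=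
            mul_le_mul_of_nonneg_left hstep hC₂nn
        _ = C₂ * (2 / α) * b ^ (α / 2) := by ring
  have key1 : C₁ * a = l / r ^ 2 * (1 / 3 ^ α) := by
    have h3 : (3:ℝ) ^ (2 - α) = 9 / 3 ^ α := by
      rw [Real.rpow_sub (by norm_num : (0:ℝ) < 3), Real.rpow_two]
      norm_num
    have h3pos : (0:ℝ) < (3:ℝ) ^ α := Real.rpow_pos_of_pos (by norm_num) _
    rw [hC₁, ha, h3]
    field_simp
    ring
  have key2 : C₂ * (2 / α) * b ^ (α / 2) = l / r ^ 2 * (2 / α * (r / y) ^ α) := by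
    have hbpow : b ^ (α / 2) = (y ^ α)⁻¹ := by
      have hby : b = y ^ (-2 : ℝ) := by
        rw [hb, Real.rpow_neg hy.le, Real.rpow_two, one_div]
      rw [hby, ← Real.rpow_mul hy.le, show (-2:ℝ) * (α / 2) = -α by ring,
        Real.rpow_neg hy.le]
    have hrpow : r ^ (α - 2) = r ^ α / r ^ 2 := by
      rw [Real.rpow_sub hr, Real.rpow_two]
    have hdiv : (r / y) ^ α = r ^ α / y ^ α := Real.div_rpow hr.le hy.le α
    have hy0 : (0:ℝ) < y ^ α := Real.rpow_pos_of_pos hy _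
    rw [hC₂, hbpow, hrpow, hdiv]
    ring
  calc (∫ s in Ioi (0:ℝ), G s) ≤ C₁ * a + C₂ * (2 / α) * b ^ (α / 2) := by
        rw [hsplit1, hsplit2, hzero3]
        linarith [hB1, hB2]
  _ = l / r ^ 2 * (1 / 3 ^ α + 2 / α * (r / y) ^ α) := by
      rw [key1, key2]
      ring
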